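/- The abstract group with presentation ⟨s, t, z | s² = z, t³ = z², (st)³ = z², [s,z] = 1, [t,z] = 1, z² = 1⟩ is isomorphic to SL(2, 𝔽₃) and has order 24. -/

import Mathlib

/-- The relations of the presentation
`⟨s, t, z | s² = z, t³ = z², (st)³ = z², [s,z] = 1, [t,z] = 1, z² = 1⟩`,
with `s, t, z` the generators `0, 1, 2`. -/
def G4rels : Set (FreeGroup (Fin 3)) :=
  { FreeGroup.of 0 ^ 2 * (FreeGroup.of 2)⁻¹,
    FreeGroup.of 1 ^ 3 * (FreeGroup.of 2 ^ 2)⁻¹,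
    (FreeGroup.of 0 * FreeGroup.of 1) ^ 3 * (FreeGroup.of 2 ^ 2)⁻¹,
    FreeGroup.of 0 * FreeGroup.of 2 * (FreeGroup.of 0)⁻¹ * (FreeGroup.of 2)⁻¹,
    FreeGroup.of 1 * FreeGroup.of 2 * (FreeGroup.of 1)⁻¹ * (FreeGroup.of 2)⁻¹,
    FreeGroup.of 2 ^ 2 }

namespace G4
abbrev G := PresentedGroup G4rels
def σ : G := .of 0
def τ : G := .of 1
def ζ : G := .of 2

lemma rel_one {r : FreeGroup (Fin 3)} (h : r ∈ G4rels) : PresentedGroup.mk G4rels r = 1 :=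
  (QuotientGroup.eq_one_iff r).2 (Subgroup.subset_normalClosure h)

lemma r1 : σ ^ 2 = ζ := by
  have := rel_one (show FreeGroup.of 0 ^ 2 * (FreeGroup.of 2)⁻¹ ∈ G4rels by simp [G4rels])
  simp only [map_mul, map_pow, map_inv] at this
  rw [mul_inv_eq_one] at this
  exact this

lemma r6 : ζ ^ 2 = 1 := by
  have := rel_one (show FreeGroup.of 2 ^ 2 ∈ G4rels by simp [G4rels])
  simp only [map_pow] at this
  exact this

lemma r2 : τ ^ 3 = 1 := by
  have := rel_one (show FreeGroup.of 1 ^ 3 * (FreeGroup.of 2 ^ 2)⁻¹ ∈ G4rels by simp [G4rels])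
  simp only [map_mul, map_pow, map_inv] at this
  rw [mul_inv_eq_one] at this
  have h2 : τ ^ 3 = ζ ^ 2 := this
  rw [h2]; exact r6

lemma r3 : (σ * τ) ^ 3 = 1 := by
  have := rel_one (show (FreeGroup.of 0 * FreeGroup.of 1) ^ 3 * (FreeGroup.of 2 ^ 2)⁻¹ ∈ G4rels by simp [G4rels])
  simp only [map_mul, map_pow, map_inv] at this
  rw [mul_inv_eq_one] at this
  have h2 : (σ * τ) ^ 3 = ζ ^ 2 := this
  rw [h2]; exact r6

lemma rc1 : σ * ζ = ζ * σ := by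
  have := rel_one (show FreeGroup.of 0 * FreeGroup.of 2 * (FreeGroup.of 0)⁻¹ * (FreeGroup.of 2)⁻¹ ∈ G4rels by simp [G4rels])
  simp only [map_mul, map_inv] at this
  have h2 : σ * ζ * σ⁻¹ * ζ⁻¹ = 1 := this
  calc σ * ζ = σ * ζ * σ⁻¹ * ζ⁻¹ * (ζ * σ) := by group
  _ = ζ * σ := by rw [h2]; group

lemma rc2 : τ * ζ = ζ * τ := by
  have := rel_one (show FreeGroup.of 1 * FreeGroup.of 2 * (FreeGroup.of 1)⁻¹ * (FreeGroup.of 2)⁻¹ ∈ G4rels by simp [G4rels])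
  simp only [map_mul, map_inv] at this
  have h2 : τ * ζ * τ⁻¹ * ζ⁻¹ = 1 := this
  calc τ * ζ = τ * ζ * τ⁻¹ * ζ⁻¹ * (ζ * τ) := by group
  _ = ζ * τ := by rw [h2]; group

lemma central (g : G) : g * ζ = ζ * g := by
  have hg : g ∈ Subgroup.centralizer {ζ} := by
    refine PresentedGroup.generated_by _ _ (fun j => ?_) g
    rw [Subgroup.mem_centralizer_iff]
    intro h hh
    rw [Set.mem_singleton_iff] at hh
    subst hh
    fin_cases j
    · exact rc1.symm
    · exact rc2.symm
    · rfl
  exact (Subgroup.mem_centralizer_iff.1 hg ζ rfl).symm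

lemma inv_σ : σ⁻¹ = ζ * σ := by
  have h : σ * (ζ * σ) = 1 := by
    rw [← mul_assoc, central σ, mul_assoc, ← sq, r1, ← sq, r6]
  exact inv_eq_of_mul_eq_one_right h

lemma inv_τ : τ⁻¹ = τ ^ 2 := by
  have h : τ * τ ^ 2 = 1 := by rw [← pow_succ']; exact r2
  exact inv_eq_of_mul_eq_one_right h

lemma hστ6 : σ * τ * σ * τ * σ * τ = 1 := by
  calc σ * τ * σ * τ * σ * τ = (σ * τ) ^ 3 := by
        simp [pow_succ, mul_assoc]
  _ = 1 := r3

-- (a): στστ = ζ * τ^2 * σ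
lemma keyA : σ * τ * σ * τ = ζ * (τ ^ 2 * σ) := by
  have h : σ * τ * σ * τ = (σ * τ)⁻¹ := by
    have := hστ6
    calc σ * τ * σ * τ = (σ * τ * σ * τ * σ * τ) * (σ * τ)⁻¹ := by group
    _ = (σ * τ)⁻¹ := by rw [this]; group
  rw [h, mul_inv_rev, inv_σ, inv_τ, ← mul_assoc, central (τ ^ 2), mul_assoc]

-- (c): τστσ = ζ * σ * τ^2
lemma keyC : τ * σ * τ * σ = ζ * (σ * τ ^ 2) := by
  have h : τ * σ * τ * σ = (τ * σ)⁻¹ := by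
    have h6 : τ * σ * τ * σ * τ * σ = 1 := by
      calc τ * σ * τ * σ * τ * σ = τ * (σ * τ * σ * τ * σ * τ) * τ⁻¹ := by group
      _ = 1 := by rw [hστ6]; group
    calc τ * σ * τ * σ = (τ * σ * τ * σ * τ * σ) * (τ * σ)⁻¹ := by group
    _ = (τ * σ)⁻¹ := by rw [h6]; group
  rw [h, mul_inv_rev, inv_σ, inv_τ, ← mul_assoc]

-- (b): στ²σ = τστ
lemma keyB : σ * τ ^ 2 * σ = τ * σ * τ := by
  have h6 : τ * σ * τ * σ * τ * σ = 1 := by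
    calc τ * σ * τ * σ * τ * σ = τ * (σ * τ * σ * τ * σ * τ) * τ⁻¹ := by group
    _ = 1 := by rw [hστ6]; group
  have h : τ * σ * τ = (σ * τ * σ)⁻¹ := by
    calc τ * σ * τ = (τ * σ * τ * σ * τ * σ) * (σ * τ * σ)⁻¹ := by group
    _ = (σ * τ * σ)⁻¹ := by rw [h6]; group
  rw [h, mul_inv_rev, mul_inv_rev, inv_σ, inv_τ]
  calc σ * τ ^ 2 * σ = ζ * ζ * (σ * τ ^ 2 * σ) := by rw [← sq, r6, one_mul]
  _ = ζ * (ζ * (σ * τ ^ 2)) * σ := by group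
  _ = ζ * (σ * τ ^ 2 * ζ) * σ := by rw [central (σ * τ ^ 2)]
  _ = ζ * σ * (τ ^ 2 * (ζ * σ)) := by group

end G4

namespace G4

def j : G := τ * σ * τ ^ 2
def k : G := τ ^ 2 * σ * τ

lemma p_ss : σ * σ = ζ := by rw [← sq]; exact r1

lemma p_jj : j * j = ζ := by
  calc j * j = τ * σ * τ ^ 3 * (σ * τ ^ 2) := by simp only [j]; group
  _ = τ * (σ * σ) * τ ^ 2 := by rw [r2]; group
  _ = τ * ζ * τ ^ 2 := by rw [p_ss]
  _ = ζ * τ ^ 3 := by rw [central τ]; group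
  _ = ζ := by rw [r2, mul_one]

lemma p_kk : k * k = ζ := by
  calc k * k = τ ^ 2 * σ * τ ^ 3 * (σ * τ) := by simp only [k]; group
  _ = τ ^ 2 * (σ * σ) * τ := by rw [r2]; group
  _ = τ ^ 2 * ζ * τ := by rw [p_ss]
  _ = ζ * τ ^ 3 := by rw [central (τ ^ 2)]; group
  _ = ζ := by rw [r2, mul_one]

lemma p_sj : σ * j = ζ * k := by
  calc σ * j = σ * τ * σ * τ * τ := by simp only [j]; simp [pow_succ, mul_assoc]
  _ = ζ * (τ ^ 2 * σ) * τ := by rw [keyA]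
  _ = ζ * k := by simp only [k]; simp [pow_succ, mul_assoc]

lemma p_js : j * σ = k := by
  calc j * σ = τ * (σ * τ ^ 2 * σ) := by simp only [j]; group
  _ = τ * (τ * σ * τ) := by rw [keyB]
  _ = k := by simp only [k]; simp [pow_succ, mul_assoc]

lemma p_sk : σ * k = j := by
  calc σ * k = σ * τ ^ 2 * σ * τ := by simp only [k]; group
  _ = τ * σ * τ * τ := by rw [keyB]
  _ = j := by simp only [j]; simp [pow_succ, mul_assoc]

lemma p_ks : k * σ = ζ * j := by
  calc k * σ = τ * (τ * σ * τ * σ) := by simp only [k]; simp [pow_succ, mul_assoc]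
  _ = τ * ζ * (σ * τ ^ 2) := by rw [keyC]; group
  _ = ζ * τ * (σ * τ ^ 2) := by rw [central τ]
  _ = ζ * j := by simp only [j]; group

lemma p_jk : j * k = ζ * σ := by
  calc j * k = τ * σ * τ ^ 3 * (τ * σ * τ) := by simp only [j, k]; group
  _ = τ * (σ * τ * σ * τ) := by rw [r2]; group
  _ = τ * ζ * (τ ^ 2 * σ) := by rw [keyA]; group
  _ = ζ * (τ ^ 3 * σ) := by rw [central τ]; group
  _ = ζ * σ := by rw [r2]; group

lemma p_kj : k * j = σ := by
  calc k * j = τ ^ 2 * (σ * τ ^ 2 * σ) * τ ^ 2 := by simp only [j, k]; simp [pow_succ, mul_assoc]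
  _ = τ ^ 2 * (τ * σ * τ) * τ ^ 2 := by rw [keyB]
  _ = τ ^ 3 * σ * τ ^ 3 := by group
  _ = σ := by rw [r2]; group

end G4

namespace G4

def qq : Fin 4 → G := ![1, σ, j, k]
def cc : Fin 3 → G := ![σ, j, k]
def tab : Fin 4 → Fin 3 → Fin 2 × Fin 4 :=
  ![![(0,1),(0,2),(0,3)],
    ![(1,0),(1,3),(0,2)],
    ![(0,3),(1,0),(1,1)],
    ![(1,2),(0,1),(1,0)]]

lemma hconj (c : Fin 3) : τ ^ (c : ℕ) * σ = cc c * τ ^ (c : ℕ) := by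
  fin_cases c
  · show τ ^ 0 * σ = σ * τ ^ 0
    rw [pow_zero, one_mul, mul_one]
  · show τ ^ 1 * σ = j * τ ^ 1
    simp only [j, pow_one]
    calc τ * σ = τ * σ * τ ^ 3 := by rw [r2, mul_one]
    _ = τ * σ * τ ^ 2 * τ := by simp [pow_succ, mul_assoc]
  · show τ ^ 2 * σ = k * τ ^ 2
    simp only [k]
    calc τ ^ 2 * σ = τ ^ 2 * σ * τ ^ 3 := by rw [r2, mul_one]
    _ = τ ^ 2 * σ * τ * τ ^ 2 := by simp [pow_succ, mul_assoc]

lemma hmul (b : Fin 4) (c : Fin 3) :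
    qq b * cc c = ζ ^ (((tab b c).1 : ℕ)) * qq (tab b c).2 := by
  fin_cases b <;> fin_cases c <;>
    simp [qq, cc, tab, p_ss, p_jj, p_kk, p_sj, p_js, p_sk, p_ks, p_jk, p_kj]

def f : Fin 2 × Fin 4 × Fin 3 → G :=
  fun x => ζ ^ (x.1 : ℕ) * qq x.2.1 * τ ^ (x.2.2 : ℕ)

lemma zpow_mod (n : ℕ) : ζ ^ (n % 2) = ζ ^ n := by
  conv_rhs => rw [← Nat.div_add_mod n 2]
  rw [pow_add, pow_mul, r6, one_pow, one_mul]

lemma tpow_mod (n : ℕ) : τ ^ (n % 3) = τ ^ n := by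
  conv_rhs => rw [← Nat.div_add_mod n 3]
  rw [pow_add, pow_mul, r2, one_pow, one_mul]

lemma stepτ (x : Fin 2 × Fin 4 × Fin 3) : ∃ y, f x * τ = f y := by
  obtain ⟨a, b, c⟩ := x
  refine ⟨(a, b, c + 1), ?_⟩
  show ζ ^ (a : ℕ) * qq b * τ ^ (c : ℕ) * τ = ζ ^ (a : ℕ) * qq b * τ ^ ((c + 1 : Fin 3) : ℕ)
  rw [mul_assoc, ← pow_succ, Fin.val_add, Fin.val_one, tpow_mod, mul_assoc]

lemma stepζ (x : Fin 2 × Fin 4 × Fin 3) : ∃ y, f x * ζ = f y := by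
  obtain ⟨a, b, c⟩ := x
  refine ⟨(a + 1, b, c), ?_⟩
  show ζ ^ (a : ℕ) * qq b * τ ^ (c : ℕ) * ζ = ζ ^ ((a + 1 : Fin 2) : ℕ) * qq b * τ ^ (c : ℕ)
  rw [central (ζ ^ (a : ℕ) * qq b * τ ^ (c : ℕ)), ← mul_assoc, ← mul_assoc, ← pow_succ',
    Fin.val_add, Fin.val_one, zpow_mod]

lemma stepσ (x : Fin 2 × Fin 4 × Fin 3) : ∃ y, f x * σ = f y := by
  obtain ⟨a, b, c⟩ := x
  refine ⟨(a + (tab b c).1, (tab b c).2, c), ?_⟩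
  show ζ ^ (a : ℕ) * qq b * τ ^ (c : ℕ) * σ
      = ζ ^ ((a + (tab b c).1 : Fin 2) : ℕ) * qq (tab b c).2 * τ ^ (c : ℕ)
  calc ζ ^ (a : ℕ) * qq b * τ ^ (c : ℕ) * σ
      = ζ ^ (a : ℕ) * qq b * (cc c * τ ^ (c : ℕ)) := by rw [mul_assoc, hconj]
    _ = ζ ^ (a : ℕ) * (qq b * cc c) * τ ^ (c : ℕ) := by rw [← mul_assoc, mul_assoc (ζ ^ (a : ℕ))]
    _ = ζ ^ (a : ℕ) * (ζ ^ (((tab b c).1 : ℕ)) * qq (tab b c).2) * τ ^ (c : ℕ) := by rw [hmul]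
    _ = ζ ^ ((a : ℕ) + ((tab b c).1 : ℕ)) * qq (tab b c).2 * τ ^ (c : ℕ) := by
        rw [← mul_assoc, ← pow_add]
    _ = ζ ^ ((a + (tab b c).1 : Fin 2) : ℕ) * qq (tab b c).2 * τ ^ (c : ℕ) := by
        rw [Fin.val_add, zpow_mod]

lemma inv_step {x : G} (h : ∀ y, ∃ y', f y * x = f y') (y : Fin 2 × Fin 4 × Fin 3) :
    ∃ y', f y * x⁻¹ = f y' := by
  have hfin : (Set.range f).Finite := Set.finite_range f
  have hmem : ∀ g : Set.range f, (g : G) * x ∈ Set.range f := by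
    rintro ⟨g, yy, rfl⟩
    obtain ⟨y', hy'⟩ := h yy
    exact ⟨y', hy'.symm⟩
  let φ : Set.range f → Set.range f := fun g => ⟨(g : G) * x, hmem g⟩
  have hinj : Function.Injective φ := by
    intro g1 g2 hg
    have := congrArg Subtype.val hg
    exact Subtype.ext (mul_right_cancel this)
  have : Finite (Set.range f) := hfin.to_subtype
  have hsurj := Finite.injective_iff_surjective.mp hinj
  obtain ⟨⟨g, yy, hgy⟩, heq⟩ := hsurj ⟨f y, Set.mem_range_self y⟩
  have hgx : g * x = f y := congrArg Subtype.val heq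
  refine ⟨yy, ?_⟩
  rw [← hgx, mul_inv_cancel_right]
  exact hgy.symm

lemma f_surj (g : G) : ∃ y, f y = g := by
  have key : ∀ g : G, ∀ y, ∃ y', f y * g = f y' := by
    intro g
    have hg : g ∈ Subgroup.closure (Set.range (PresentedGroup.of : Fin 3 → G)) := by
      rw [PresentedGroup.closure_range_of]; exact Subgroup.mem_top g
    induction hg using Subgroup.closure_induction with
    | mem x hx =>
        obtain ⟨i, rfl⟩ := hx
        fin_cases i
        · exact stepσ
        · exact stepτ
        · exact stepζ
    | one => exact fun y => ⟨y, by rw [mul_one]⟩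
    | mul x y hx hy ihx ihy =>
        intro yy
        obtain ⟨y1, h1⟩ := ihx yy
        obtain ⟨y2, h2⟩ := ihy y1
        exact ⟨y2, by rw [← mul_assoc, h1, h2]⟩
    | inv x hx ih => exact inv_step ih
  obtain ⟨y', hy'⟩ := key g (0, 0, 0)
  refine ⟨y', ?_⟩
  have h0 : f (0, 0, 0) = 1 := by simp [f, qq]
  rw [← hy', h0, one_mul]

end G4

namespace G4

abbrev SL3 := Matrix.SpecialLinearGroup (Fin 2) (ZMod 3)

def Sm : SL3 := ⟨!![0, 2; 1, 0], by decide⟩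
def Tm : SL3 := ⟨!![1, 2; 0, 1], by decide⟩
def Zm : SL3 := ⟨!![2, 0; 0, 2], by decide⟩

instance : DecidableEq SL3 := fun a b =>
  decidable_of_iff ((a : Matrix (Fin 2) (Fin 2) (ZMod 3)) = b) Subtype.ext_iff.symm

def fm0 : Fin 3 → SL3 := ![Sm, Tm, Zm]



lemma hrels : ∀ r ∈ G4rels, FreeGroup.lift fm0 r = 1 := by
  intro r hr
  simp only [G4rels, Set.mem_insert_iff, Set.mem_singleton_iff] at hr
  rcases hr with rfl | rfl | rfl | rfl | rfl | rfl <;>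
    simp only [_root_.map_mul, _root_.map_pow, _root_.map_inv, FreeGroup.lift_apply_of, fm0,
      Matrix.cons_val_zero, Matrix.cons_val_one, Matrix.head_cons, Matrix.cons_val_two,
      Matrix.tail_cons] <;> decide

def qm : Fin 4 → SL3 := ![1, Sm, Tm * Sm * Tm ^ 2, Tm ^ 2 * Sm * Tm]

def fm : Fin 2 × Fin 4 × Fin 3 → SL3 :=
  fun x => Zm ^ (x.1 : ℕ) * qm x.2.1 * Tm ^ (x.2.2 : ℕ)

lemma fm_inj : Function.Injective fm := by decide

lemma fm_bij : Function.Bijective fm :=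
  (Fintype.bijective_iff_injective_and_card fm).2 ⟨fm_inj, by decide⟩


noncomputable def Phi : G →* SL3 := PresentedGroup.toGroup hrels

lemma Phi_σ : Phi σ = Sm := PresentedGroup.toGroup.of hrels
lemma Phi_τ : Phi τ = Tm := PresentedGroup.toGroup.of hrels
lemma Phi_ζ : Phi ζ = Zm := PresentedGroup.toGroup.of hrels

lemma Phi_qq (b : Fin 4) : Phi (qq b) = qm b := by
  fin_cases b <;>
    simp [qq, qm, j, k, _root_.map_mul, _root_.map_pow, _root_.map_one, Phi_σ, Phi_τ]

lemma Phi_f (x : Fin 2 × Fin 4 × Fin 3) : Phi (f x) = fm x := by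
  obtain ⟨a, b, c⟩ := x
  simp only [f, fm, _root_.map_mul, _root_.map_pow, Phi_ζ, Phi_τ, Phi_qq]

lemma f_surjective : Function.Surjective f := fun g => f_surj g

lemma Phi_surjective : Function.Surjective Phi := by
  intro m
  obtain ⟨x, hx⟩ := fm_bij.2 m
  exact ⟨f x, by rw [Phi_f, hx]⟩

lemma card_SL3 : Nat.card SL3 = 24 := by
  rw [Nat.card_eq_fintype_card]; decide

lemma card_G : Nat.card G = 24 := by
  refine le_antisymm ?_ ?_
  · calc Nat.card G ≤ Nat.card (Fin 2 × Fin 4 × Fin 3) :=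
          Nat.card_le_card_of_surjective f f_surjective
    _ = 24 := by simp [Nat.card_eq_fintype_card]
  · rw [← card_SL3]
    haveI : Finite G := Finite.of_surjective f f_surjective
    exact Nat.card_le_card_of_surjective Phi Phi_surjective

lemma Phi_bijective : Function.Bijective Phi := by
  haveI : Finite G := Finite.of_surjective f f_surjective
  exact (Nat.bijective_iff_surjective_and_card Phi).2
    ⟨Phi_surjective, by rw [card_G, card_SL3]⟩

end G4

/-- The group presented by
`⟨s, t, z | s² = z, t³ = z², (st)³ = z², [s,z] = 1, [t,z] = 1, z² = 1⟩`
is isomorphic to `SL(2, 𝔽₃)` and has order `24`. -/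
theorem stmt_17 :
    Nonempty (PresentedGroup G4rels ≃* Matrix.SpecialLinearGroup (Fin 2) (ZMod 3)) ∧
      Nat.card (PresentedGroup G4rels) = 24 :=
  ⟨⟨MulEquiv.ofBijective G4.Phi G4.Phi_bijective⟩, G4.card_G⟩
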